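/- For any two distinct primes p and q, the independent graph I_G(Z_{pq}) is a complete 4-partite graph: it is isomorphic to the complete multipartite graph with four parts of sizes 1, p − 1, q − 1, and (p − 1)(q − 1), these parts being the sets of elements of Z_{pq} of additive order 1, p, q, and pq respectively. -/

import Mathlib

open SimpleGraph

/-- The independent graph of `ZMod n`: two distinct vertices are adjacent iff
their additive orders differ. -/
def indepGraph (n : ℕ) : SimpleGraph (ZMod n) where
  Adj a b := addOrderOf a ≠ addOrderOf b
  symm := ⟨fun _ _ h => Ne.symm h⟩
  loopless := ⟨fun _ h => h rfl⟩

noncomputable instance (n : ℕ) : DecidableRel (indepGraph n).Adj :=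
  fun a b => inferInstanceAs (Decidable (addOrderOf a ≠ addOrderOf b))

/-- For distinct primes p, q, the independent graph of ZMod (p*q) is a complete
4-partite graph with parts of sizes 1, p-1, q-1 and (p-1)*(q-1). -/
theorem stmt_18 (p q : ℕ) (hp : p.Prime) (hq : q.Prime) (hpq : p ≠ q) :
    Nonempty (indepGraph (p * q) ≃g completeMultipartiteGraph
      (fun i : Fin 4 => {a : ZMod (p * q) // addOrderOf a = ![1, p, q, p * q] i})) ∧
    Nat.card {a : ZMod (p * q) // addOrderOf a = 1} = 1 ∧
    Nat.card {a : ZMod (p * q) // addOrderOf a = p} = p - 1 ∧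
    Nat.card {a : ZMod (p * q) // addOrderOf a = q} = q - 1 ∧
    Nat.card {a : ZMod (p * q) // addOrderOf a = p * q} = (p - 1) * (q - 1) := by
  have hpos : 0 < p * q := Nat.mul_pos hp.pos hq.pos
  haveI : NeZero (p * q) := ⟨hpos.ne'⟩
  have h2p := hp.two_le
  have h2q := hq.two_le
  have hp1 : p ≠ 1 := hp.one_lt.ne'
  have hq1 : q ≠ 1 := hq.one_lt.ne'
  have hplt : p < p * q := by nlinarith
  have hqlt : q < p * q := by nlinarith
  have h1lt : 1 < p * q := by nlinarith
  have hvinj : Function.Injective (![1, p, q, p * q] : Fin 4 → ℕ) := by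
    intro i j hij
    fin_cases i <;> fin_cases j <;>
      first
        | rfl
        | (exfalso; simp at hij; omega)
  -- every element's order is one of 1, p, q, p*q
  have hcases : ∀ a : ZMod (p * q), addOrderOf a = 1 ∨ addOrderOf a = p ∨
      addOrderOf a = q ∨ addOrderOf a = p * q := by
    intro a
    have hdvd : addOrderOf a ∣ p * q := by
      have := addOrderOf_dvd_card (x := a)
      rwa [ZMod.card] at this
    have h : addOrderOf a ∈ (p * q).divisors := Nat.mem_divisors.2 ⟨hdvd, hpos.ne'⟩
    rw [Nat.divisors_mul, hp.divisors, hq.divisors, Finset.mem_mul] at h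
    obtain ⟨x, hx, y, hy, hxy⟩ := h
    simp only [Finset.mem_insert, Finset.mem_singleton] at hx hy
    rcases hx with rfl | rfl <;> rcases hy with rfl | rfl <;> simp_all
  let idx : ZMod (p * q) → Fin 4 := fun a =>
    if addOrderOf a = 1 then 0 else if addOrderOf a = p then 1
    else if addOrderOf a = q then 2 else 3
  have hidx : ∀ a, addOrderOf a = (![1, p, q, p * q] : Fin 4 → ℕ) (idx a) := by
    intro a
    rcases hcases a with h | h | h | h
    · have h0 : idx a = 0 := if_pos h
      rw [h0, h]; rfl
    · have h0 : idx a = 1 := by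
        show (if addOrderOf a = 1 then (0 : Fin 4) else if addOrderOf a = p then 1
          else if addOrderOf a = q then 2 else 3) = 1
        rw [if_neg (by rw [h]; exact hp1), if_pos h]
      rw [h0, h]; rfl
    · have h0 : idx a = 2 := by
        show (if addOrderOf a = 1 then (0 : Fin 4) else if addOrderOf a = p then 1
          else if addOrderOf a = q then 2 else 3) = 2
        rw [if_neg (by rw [h]; exact hq1), if_neg (by rw [h]; exact Ne.symm hpq), if_pos h]
      rw [h0, h]; rfl
    · have h0 : idx a = 3 := by
        show (if addOrderOf a = 1 then (0 : Fin 4) else if addOrderOf a = p then 1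
          else if addOrderOf a = q then 2 else 3) = 3
        rw [if_neg (by rw [h]; omega), if_neg (by rw [h]; omega), if_neg (by rw [h]; omega)]
      rw [h0, h]; rfl
  refine ⟨⟨{ toFun := fun a => ⟨idx a, a, hidx a⟩
             invFun := fun s => s.2.1
             left_inv := fun a => rfl
             right_inv := ?_
             map_rel_iff' := ?_ }⟩, ?_, ?_, ?_, ?_⟩
  · rintro ⟨i, a, ha⟩
    have h : idx a = i := hvinj (by rw [← hidx a, ha])
    subst h
    rfl
  · intro a b
    show idx a ≠ idx b ↔ addOrderOf a ≠ addOrderOf b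
    rw [hidx a, hidx b]
    exact hvinj.ne_iff.symm
  · have key := IsAddCyclic.card_addOrderOf_eq_totient (α := ZMod (p * q)) (d := 1)
      (by rw [ZMod.card]; exact one_dvd _)
    rw [Nat.card_eq_fintype_card, Fintype.card_subtype, key, Nat.totient_one]
  · have key := IsAddCyclic.card_addOrderOf_eq_totient (α := ZMod (p * q)) (d := p)
      (by rw [ZMod.card]; exact dvd_mul_right p q)
    rw [Nat.card_eq_fintype_card, Fintype.card_subtype, key, Nat.totient_prime hp]
  · have key := IsAddCyclic.card_addOrderOf_eq_totient (α := ZMod (p * q)) (d := q)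
      (by rw [ZMod.card]; exact dvd_mul_left q p)
    rw [Nat.card_eq_fintype_card, Fintype.card_subtype, key, Nat.totient_prime hq]
  · have key := IsAddCyclic.card_addOrderOf_eq_totient (α := ZMod (p * q)) (d := p * q)
      (by rw [ZMod.card])
    rw [Nat.card_eq_fintype_card, Fintype.card_subtype, key,
      Nat.totient_mul ((Nat.coprime_primes hp hq).2 hpq),
      Nat.totient_prime hp, Nat.totient_prime hq]
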